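/- If G is an n-vertex k-regular graph with n odd and k >= (n+1)/2, then G contains more than n²/12 triangles. -/

import Mathlib

open Finset SimpleGraph

/-- An `n`-vertex `k`-regular graph with `n` odd and `k ≥ (n+1)/2` has more than `n²/12`
triangles. -/
theorem stmt9 {V : Type*} [Fintype V] [DecidableEq V] (G : SimpleGraph V)
    [DecidableRel G.Adj] (n k : ℕ) (hn : Fintype.card V = n) (hodd : Odd n)
    (hk : 2 * k ≥ n + 1) (hreg : G.IsRegularOfDegree k) :
    ((G.cliqueFinset 3).card : ℝ) > (n : ℝ) ^ 2 / 12 := by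
  classical
  set T3 : Finset (V × V × V) :=
    univ.filter (fun p => G.Adj p.1 p.2.1 ∧ G.Adj p.1 p.2.2 ∧ G.Adj p.2.1 p.2.2) with hT3
  set E2 : Finset (V × V) := univ.filter (fun p => G.Adj p.1 p.2) with hE2
  -- count ordered edges
  have hE2card : E2.card = n * k := by
    rw [Finset.card_eq_sum_card_fiberwise (f := Prod.fst) (t := univ) (fun p _ => mem_univ _)]
    have hfib : ∀ u : V, (E2.filter (fun p => p.1 = u)).card = k := by
      intro u
      rw [← hreg u, ← card_neighborFinset_eq_degree]
      apply Finset.card_bij (fun p _ => p.2)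
      · intro p hp
        simp only [hE2, Finset.mem_filter, Finset.mem_univ, true_and] at hp
        rw [mem_neighborFinset, ← hp.2]
        exact hp.1
      · intro p hp q hq h
        simp only [Finset.mem_filter] at hp hq
        exact Prod.ext (hp.2.trans hq.2.symm) h
      · intro w hw
        refine ⟨(u, w), ?_, rfl⟩
        simp only [hE2, Finset.mem_filter, Finset.mem_univ, true_and]
        exact ⟨(mem_neighborFinset G u w).mp hw, trivial⟩
    rw [Finset.sum_congr rfl (fun u _ => hfib u), Finset.sum_const, card_univ, hn, smul_eq_mul]
  -- every edge has a common neighbor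
  have hne : ∀ q ∈ E2, ∃ w, G.Adj q.1 w ∧ G.Adj q.2 w := by
    intro q _
    have h1 : (G.neighborFinset q.1).card = k := by
      rw [card_neighborFinset_eq_degree]; exact hreg _
    have h2 : (G.neighborFinset q.2).card = k := by
      rw [card_neighborFinset_eq_degree]; exact hreg _
    have h3 := Finset.card_inter_add_card_union (G.neighborFinset q.1) (G.neighborFinset q.2)
    have h4 : (G.neighborFinset q.1 ∪ G.neighborFinset q.2).card ≤ n := by
      rw [← hn, ← card_univ]; exact Finset.card_le_card (subset_univ _)
    have hpos : 0 < ((G.neighborFinset q.1) ∩ (G.neighborFinset q.2)).card := by omega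
    obtain ⟨w, hw⟩ := Finset.card_pos.mp hpos
    rw [Finset.mem_inter, mem_neighborFinset, mem_neighborFinset] at hw
    exact ⟨w, hw⟩
  -- lower bound on ordered triangles
  have hT3ge : E2.card ≤ T3.card := by
    rw [Finset.card_eq_sum_card_fiberwise
      (f := fun p : V × V × V => (p.1, p.2.1)) (s := T3) (t := E2)
      (fun p hp => by
        simp only [hT3, Finset.mem_filter, Finset.mem_univ, true_and] at hp
        simp only [hE2, Finset.mem_filter, Finset.mem_univ, true_and]
        simpa using (by simpa [hT3] using hp : G.Adj p.1 p.2.1 ∧ G.Adj p.1 p.2.2 ∧ G.Adj p.2.1 p.2.2).1)]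
    calc E2.card = ∑ _q ∈ E2, 1 := by simp
      _ ≤ ∑ q ∈ E2, (T3.filter fun p => (p.1, p.2.1) = q).card := by
          apply Finset.sum_le_sum
          intro q hq
          obtain ⟨w, hw1, hw2⟩ := hne q hq
          have hq' : G.Adj q.1 q.2 := by
            simpa [hE2] using hq
          refine Nat.one_le_iff_ne_zero.mpr (Finset.card_ne_zero_of_mem
            (a := (q.1, q.2, w)) ?_)
          simp only [hT3, Finset.mem_filter, Finset.mem_univ, true_and]
          exact ⟨⟨hq', hw1, hw2⟩, trivial⟩
  -- upper bound: each triangle corresponds to at most 6 ordered triples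
  have hT3le : T3.card ≤ 6 * (G.cliqueFinset 3).card := by
    apply Finset.card_le_mul_card_image_of_maps_to
      (f := fun p : V × V × V => ({p.1, p.2.1, p.2.2} : Finset V))
    · intro p hp
      simp only [hT3, Finset.mem_filter, Finset.mem_univ, true_and] at hp
      rw [mem_cliqueFinset_iff, is3Clique_triple_iff]
      exact hp
    · intro s hs
      rw [mem_cliqueFinset_iff, is3Clique_iff] at hs
      obtain ⟨a, b, c, hab, hac, hbc, rfl⟩ := hs
      have hsub : (T3.filter fun p => ({p.1, p.2.1, p.2.2} : Finset V) = {a, b, c}) ⊆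
          {(a,b,c), (a,c,b), (b,a,c), (b,c,a), (c,a,b), (c,b,a)} := by
        rintro ⟨x, y, z⟩ hp
        simp only [hT3, Finset.mem_filter, Finset.mem_univ, true_and] at hp
        obtain ⟨⟨h12, h13, h23⟩, hset⟩ := hp
        have h1 : x ∈ ({a, b, c} : Finset V) := by rw [← hset]; simp
        have h2 : y ∈ ({a, b, c} : Finset V) := by rw [← hset]; simp
        have h3 : z ∈ ({a, b, c} : Finset V) := by rw [← hset]; simp
        have n12 := h12.ne
        have n13 := h13.ne
        have n23 := h23.ne
        simp only [Finset.mem_insert, Finset.mem_singleton] at h1 h2 h3 ⊢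
        rcases h1 with rfl | rfl | rfl <;> rcases h2 with rfl | rfl | rfl <;>
          rcases h3 with rfl | rfl | rfl <;> simp_all
      refine (Finset.card_le_card hsub).trans ?_
      refine (Finset.card_insert_le _ _).trans (Nat.add_le_add_right ?_ 1)
      refine (Finset.card_insert_le _ _).trans (Nat.add_le_add_right ?_ 1)
      refine (Finset.card_insert_le _ _).trans (Nat.add_le_add_right ?_ 1)
      refine (Finset.card_insert_le _ _).trans (Nat.add_le_add_right ?_ 1)
      refine (Finset.card_insert_le _ _).trans (Nat.add_le_add_right ?_ 1)
      simp
  -- arithmetic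
  have hn0 : 0 < n := hodd.pos
  have hnk : n * (n + 1) ≤ 2 * (n * k) := by nlinarith
  have key : n ^ 2 < 12 * (G.cliqueFinset 3).card := by nlinarith
  rw [gt_iff_lt, div_lt_iff₀ (by norm_num : (0:ℝ) < 12)]
  have : (n : ℝ) ^ 2 < 12 * ((G.cliqueFinset 3).card : ℝ) := by exact_mod_cast key
  linarith
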